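/- Let a ∈ ℝⁿ be a vector with aᵀa ≤ 1/α for some α > 0, let x ~ Exp(1), and set w̄ = min(e^x, 1/(α·aᵀa)). Then E[w̄²·(a aᵀ)²] ⪯ (2/α)·a aᵀ in the Loewner order. -/

import Mathlib

open Matrix Real MeasureTheory Set

theorem key_integral (c : ℝ) (hc : 1 ≤ c) :
    (∫ t in Set.Ioi (0:ℝ), (min (Real.exp t) c)^2 * Real.exp (-t)) ≤ 2 * c := by
  set L := Real.log c with hL
  have hL0 : 0 ≤ L := Real.log_nonneg hc
  have hc0 : 0 < c := lt_of_lt_of_le one_pos hc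
  have hexpL : Real.exp L = c := Real.exp_log hc0
  set f : ℝ → ℝ := fun t => (min (Real.exp t) c)^2 * Real.exp (-t) with hf
  set g : ℝ → ℝ := fun t => min (Real.exp t) (c^2 * Real.exp (-t)) with hg
  have hfg : ∀ t, f t ≤ g t := by
    intro t
    have h1 : f t ≤ Real.exp t := by
      have : (min (Real.exp t) c)^2 ≤ (Real.exp t)^2 := by
        apply sq_le_sq' _ (min_le_left _ _)
        have h0 : 0 ≤ min (Real.exp t) c := le_min (Real.exp_pos t).le hc0.le
        nlinarith [Real.exp_pos t]
      calc f t ≤ (Real.exp t)^2 * Real.exp (-t) := by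
            apply mul_le_mul_of_nonneg_right this (Real.exp_pos _).le
        _ = Real.exp t := by
            rw [sq, mul_assoc, ← Real.exp_add, add_neg_cancel, Real.exp_zero, mul_one]
    have h2 : f t ≤ c^2 * Real.exp (-t) := by
      apply mul_le_mul_of_nonneg_right _ (Real.exp_pos _).le
      apply sq_le_sq' _ (min_le_right _ _)
      have h0 : 0 ≤ min (Real.exp t) c := le_min (Real.exp_pos t).le hc0.le
      linarith
    exact le_min h1 h2
  have hfpos : ∀ t, 0 ≤ f t :=
    fun t => mul_nonneg (sq_nonneg _) (Real.exp_pos _).le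
  have hgcont : Continuous g := by
    apply (Real.continuous_exp).min
    exact continuous_const.mul (Real.continuous_exp.comp continuous_neg)
  have hfcont : Continuous f := by
    apply Continuous.mul _ (Real.continuous_exp.comp continuous_neg)
    exact ((Real.continuous_exp).min continuous_const).pow 2
  -- integrability of g on pieces
  have hint2 : IntegrableOn g (Set.Ioi L) := by
    apply Integrable.mono' ((exp_neg_integrableOn_Ioi L (by norm_num : (0:ℝ) < 1)).const_mul (c^2))
    · exact hgcont.aestronglyMeasurable.restrict
    · filter_upwards with t
      rw [Real.norm_eq_abs, abs_of_nonneg (le_min (Real.exp_pos t).le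
          (mul_nonneg (sq_nonneg c) (Real.exp_pos _).le))]
      simpa using min_le_right (Real.exp t) (c^2 * Real.exp (-t))
  have hint1 : IntegrableOn g (Set.Ioc 0 L) :=
    (hgcont.integrableOn_Icc (a := 0) (b := L)).mono_set Set.Ioc_subset_Icc_self
  have hintg : IntegrableOn g (Set.Ioi 0) := by
    rw [← Set.Ioc_union_Ioi_eq_Ioi hL0]
    exact hint1.union hint2
  have hintf : IntegrableOn f (Set.Ioi 0) := by
    apply Integrable.mono' hintg hfcont.aestronglyMeasurable.restrict
    filter_upwards with t
    rw [Real.norm_eq_abs, abs_of_nonneg (hfpos t)]; exact hfg t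
  have step1 : (∫ t in Set.Ioi (0:ℝ), f t) ≤ ∫ t in Set.Ioi (0:ℝ), g t :=
    setIntegral_mono_on hintf hintg measurableSet_Ioi (fun t _ => hfg t)
  have hsplit : (∫ t in Set.Ioi (0:ℝ), g t) =
      (∫ t in Set.Ioc (0:ℝ) L, g t) + ∫ t in Set.Ioi L, g t := by
    rw [← setIntegral_union (Set.Ioc_disjoint_Ioi le_rfl) measurableSet_Ioi hint1 hint2,
      Set.Ioc_union_Ioi_eq_Ioi hL0]
  have e1 : (∫ t in Set.Ioc (0:ℝ) L, g t) = c - 1 := by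
    have : (∫ t in Set.Ioc (0:ℝ) L, g t) = ∫ t in Set.Ioc (0:ℝ) L, Real.exp t := by
      apply setIntegral_congr_fun measurableSet_Ioc
      intro t ht
      apply min_eq_left
      rw [← sub_nonneg]
      have h1 : Real.exp t ≤ c := by rw [← hexpL]; exact Real.exp_le_exp.mpr ht.2
      have h2 : Real.exp t * Real.exp (-t) = 1 := by
        rw [← Real.exp_add, add_neg_cancel, Real.exp_zero]
      nlinarith [Real.exp_pos t, Real.exp_pos (-t)]
    rw [this, ← intervalIntegral.integral_of_le hL0, integral_exp, hexpL, Real.exp_zero]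
  have e2 : (∫ t in Set.Ioi L, g t) = c := by
    have : (∫ t in Set.Ioi L, g t) = ∫ t in Set.Ioi L, c^2 * Real.exp (-t) := by
      apply setIntegral_congr_fun measurableSet_Ioi
      intro t ht
      apply min_eq_right
      rw [← sub_nonneg]
      have h1 : c ≤ Real.exp t := by rw [← hexpL]; exact Real.exp_le_exp.mpr (le_of_lt ht)
      have h2 : Real.exp t * Real.exp (-t) = 1 := by
        rw [← Real.exp_add, add_neg_cancel, Real.exp_zero]
      nlinarith [Real.exp_pos t, Real.exp_pos (-t)]
    rw [this, MeasureTheory.integral_const_mul, integral_exp_neg_Ioi, Real.exp_neg, hexpL]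
    field_simp
  calc (∫ t in Set.Ioi (0:ℝ), f t) ≤ ∫ t in Set.Ioi (0:ℝ), g t := step1
    _ = (c - 1) + c := by rw [hsplit, e1, e2]
    _ ≤ 2 * c := by linarith

theorem psd_smul_vecMulVec {n : ℕ} (a : Fin n → ℝ) {r : ℝ} (hr : 0 ≤ r) :
    (r • Matrix.vecMulVec a a).PosSemidef := by
  refine Matrix.PosSemidef.of_dotProduct_mulVec_nonneg ?_ ?_
  · unfold Matrix.IsHermitian
    ext i j
    simp [Matrix.vecMulVec_apply, mul_comm]
  · intro x
    have h : (r • Matrix.vecMulVec a a) *ᵥ x = (r * (a ⬝ᵥ x)) • a := by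
      ext i
      simp [Matrix.mulVec, dotProduct, Matrix.vecMulVec_apply, Finset.mul_sum]
      rw [Finset.sum_mul]
      apply Finset.sum_congr rfl
      intros; ring
    rw [h]
    simp only [dotProduct_smul, smul_eq_mul, star_trivial]
    have : x ⬝ᵥ a = a ⬝ᵥ x := dotProduct_comm x a
    rw [this, mul_assoc]
    exact mul_nonneg hr (mul_self_nonneg _)

theorem vecMulVec_sq {n : ℕ} (a : Fin n → ℝ) :
    Matrix.vecMulVec a a * Matrix.vecMulVec a a = (a ⬝ᵥ a) • Matrix.vecMulVec a a := by
  ext i j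
  simp only [Matrix.mul_apply, Matrix.vecMulVec_apply, Matrix.smul_apply, smul_eq_mul,
    dotProduct, Finset.sum_mul, Finset.mul_sum]
  apply Finset.sum_congr rfl
  intros; ring

/-- For a with aᵀa ≤ 1/α and x ~ Exp(1), w̄ = min(e^x, 1/(α·aᵀa)),
    we have E[w̄²·(aaᵀ)²] ⪯ (2/α)·aaᵀ. -/
theorem truncated_weight_second_moment (n : ℕ) (α : ℝ) (hα : 0 < α)
    (a : Fin n → ℝ) (ha : a ⬝ᵥ a ≤ 1 / α) :
    ((2 / α) • Matrix.vecMulVec a a -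
      (∫ t in Set.Ioi (0 : ℝ),
          (min (Real.exp t) (1 / (α * (a ⬝ᵥ a)))) ^ 2 * Real.exp (-t)) •
        (Matrix.vecMulVec a a * Matrix.vecMulVec a a)).PosSemidef := by
  have hs0 : 0 ≤ a ⬝ᵥ a := by
    apply Finset.sum_nonneg
    intro i _
    exact mul_self_nonneg _
  rcases eq_or_lt_of_le hs0 with h0 | hpos
  · have hz : a = 0 := dotProduct_self_eq_zero.mp h0.symm
    subst hz
    have hvz : Matrix.vecMulVec (0 : Fin n → ℝ) (0 : Fin n → ℝ) = (0 : Matrix (Fin n) (Fin n) ℝ) := by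
      ext i j; simp [Matrix.vecMulVec_apply]
    rw [hvz]
    simpa using Matrix.PosSemidef.zero
  · set s := a ⬝ᵥ a with hs
    have hαs : 0 < α * s := mul_pos hα hpos
    have hαs1 : α * s ≤ 1 := by
      have h1 : α * (1 / α) = 1 := by field_simp
      nlinarith [ha, hα]
    set c := 1 / (α * s) with hc
    have hc1 : 1 ≤ c := by
      rw [hc]
      rw [le_div_iff₀ hαs]
      linarith
    have hI := key_integral c hc1
    rw [vecMulVec_sq, smul_smul, ← sub_smul]
    apply psd_smul_vecMulVec
    have hcs : c * s = 1 / α := by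
      rw [hc]; field_simp
    have : (∫ t in Set.Ioi (0 : ℝ), (min (Real.exp t) c) ^ 2 * Real.exp (-t)) * s
        ≤ 2 * c * s := by
      apply mul_le_mul_of_nonneg_right hI hs0
    rw [mul_assoc, hcs] at this
    have h2 : 2 * (1 / α) = 2 / α := by ring
    linarith [this, h2.le]
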